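/- Let P₀ be a finite poset with elements x₁,…,x_{m₀}, fix an index i₀ ∈ {1,…,m₀} and nonnegative values mᵢ for each i ≠ i₀. Then the function m_{i₀} ↦ L₊(P₀; m₁,…,m_{m₀}) is given by a polynomial in m_{i₀}, whose degree equals the sum of the values mᵢ over those i ≠ i₀ such that xᵢ is incomparable with x_{i₀} in P₀. -/

import Mathlib

open scoped Classical

/-- Underlying set of the lexicographic sum over `Fin m₀` of chains `C i` of `m i` elements. -/
abbrev LexSumChains (m₀ : ℕ) (m : Fin m₀ → ℕ) : Type := Σ i : Fin m₀, Fin (m i)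

/-- The order of the lexicographic sum `P₀ * (C₁, …, C_{m₀})` of chains over the poset
`(Fin m₀, r0)`: within a chain elements keep their order, and an element of `C i` is below an
element of `C i'` (for `i ≠ i'`) iff `xᵢ ≺₀ x_{i'}`. -/
def lexRel {m₀ : ℕ} (r0 : Fin m₀ → Fin m₀ → Prop) (m : Fin m₀ → ℕ)
    (x y : LexSumChains m₀ m) : Prop :=
  (x.1 = y.1 ∧ (x.2 : ℕ) ≤ (y.2 : ℕ)) ∨ (x.1 ≠ y.1 ∧ r0 x.1 y.1)

/-- `φ` is (the isotone bijection corresponding to) a linearization of the lexicographic sum. -/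
def IsLin {m₀ : ℕ} (r0 : Fin m₀ → Fin m₀ → Prop) (m : Fin m₀ → ℕ)
    (φ : LexSumChains m₀ m ≃ Fin (∑ i, m i)) : Prop :=
  ∀ x y, lexRel r0 m x y → φ x ≤ φ y

/-- `b` is the reference ordering, listing the elements `x_{i,j}` in lexicographic order
of the pairs `(i,j)`. -/
def IsRef {m₀ : ℕ} (m : Fin m₀ → ℕ) (b : LexSumChains m₀ m ≃ Fin (∑ i, m i)) : Prop :=
  ∀ x y : LexSumChains m₀ m,
    (x.1 < y.1 ∨ (x.1 = y.1 ∧ (x.2 : ℕ) ≤ (y.2 : ℕ))) → b x ≤ b y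

/-- `L₊(P₀; m₁, …, m_{m₀})`, the number of linearizations of the lexicographic sum of chains. -/
noncomputable def Lplus (m₀ : ℕ) (r0 : Fin m₀ → Fin m₀ → Prop) (m : Fin m₀ → ℕ) : ℕ :=
  Nat.card {φ : LexSumChains m₀ m ≃ Fin (∑ i, m i) // IsLin r0 m φ}

/-- `L₋(P₀; m₁, …, m_{m₀})`, the sign-imbalance (number of even minus number of odd
linearizations) relative to the reference ordering `b`. -/
noncomputable def Lminus (m₀ : ℕ) (r0 : Fin m₀ → Fin m₀ → Prop) (m : Fin m₀ → ℕ)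
    (b : LexSumChains m₀ m ≃ Fin (∑ i, m i)) : ℤ :=
  ∑ φ : LexSumChains m₀ m ≃ Fin (∑ i, m i),
    if IsLin r0 m φ then ((Equiv.Perm.sign (b.symm.trans φ)) : ℤ) else 0

namespace SAux
open Finset


lemma card_filter_val_lt (n : ℕ) {v : ℕ} (hv : v ≤ n) :
    ((univ : Finset (Fin n)).filter fun p : Fin n => (p : ℕ) < v).card = v := by
  have hb := Finset.card_bij' (t := (univ : Finset (Fin v)))
    (s := (univ : Finset (Fin n)).filter fun p : Fin n => (p : ℕ) < v)
    (fun p hp => (⟨(p : ℕ), (mem_filter.1 hp).2⟩ : Fin v))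
    (fun q _ => (⟨(q : ℕ), lt_of_lt_of_le q.2 hv⟩ : Fin n))
    (fun p hp => by simp) (fun q hq => by simp [q.2]) (fun p hp => rfl) (fun q hq => rfl)
  simpa using hb

lemma card_filter_val_Ico (n : ℕ) {l u : ℕ} (hlu : l ≤ u) (hu : u ≤ n) :
    ((univ : Finset (Fin n)).filter fun p : Fin n => l ≤ (p : ℕ) ∧ (p : ℕ) < u).card = u - l := by
  have h1 : ((univ : Finset (Fin n)).filter fun p : Fin n => l ≤ (p : ℕ) ∧ (p : ℕ) < u)
      = ((univ : Finset (Fin n)).filter fun p : Fin n => (p : ℕ) < u) \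
        ((univ : Finset (Fin n)).filter fun p : Fin n => (p : ℕ) < l) := by
    ext p
    simp only [mem_filter, mem_sdiff, mem_univ, true_and, not_lt]
    omega
  rw [h1, card_sdiff_of_subset (by intro p hp; simp only [mem_filter, mem_univ, true_and] at *; omega)]
  rw [card_filter_val_lt n hu, card_filter_val_lt n (le_trans hlu hu)]

lemma card_le_of_finset_fin {n k : ℕ} (s : Finset (Fin n)) (h : s.card = k) : k ≤ n := by
  rw [← h]
  exact (Finset.card_le_card (Finset.subset_univ s)).trans (by simp)

lemma orderEmbOfFin_lt_iff {n k : ℕ} (s : Finset (Fin n)) (h : s.card = k) (v : ℕ)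
    (q : Fin k) :
    ((s.orderEmbOfFin h q : Fin n) : ℕ) < v ↔
      (q : ℕ) < (s.filter fun x : Fin n => (x : ℕ) < v).card := by
  set e := s.orderEmbOfFin h with he
  set S : Finset (Fin k) := univ.filter fun q : Fin k => ((e q : Fin n) : ℕ) < v with hS
  have hcard : S.card = (s.filter fun x : Fin n => (x : ℕ) < v).card := by
    apply Finset.card_bij (fun (q : Fin k) (_ : q ∈ S) => (e q : Fin n))
    · intro a ha; simp only [hS, mem_filter, mem_univ, true_and] at ha
      simp only [mem_filter]; exact ⟨Finset.orderEmbOfFin_mem s h a, ha⟩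
    · intro a _ b _ hab; exact e.injective hab
    · intro x hx
      simp only [mem_filter] at hx
      have : x ∈ Set.range e := by rw [he, Finset.range_orderEmbOfFin]; exact hx.1
      obtain ⟨q, rfl⟩ := this
      exact ⟨q, by simp [hS, hx.2], rfl⟩
  have hdown : ∀ q ∈ S, ∀ q' : Fin k, q' ≤ q → q' ∈ S := by
    intro q hq q' hq'
    simp only [hS, mem_filter, mem_univ, true_and] at *
    exact lt_of_le_of_lt (by exact_mod_cast e.monotone hq') hq
  constructor
  · intro hlt
    have hqS : q ∈ S := by simp [hS, hlt]
    have hsub : Finset.Iic q ⊆ S := fun x hx => hdown q hqS x (Finset.mem_Iic.1 hx)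
    have := Finset.card_le_card hsub
    rw [Fin.card_Iic, hcard] at this; omega
  · intro hlt
    by_contra hqS
    have hqS' : q ∉ S := by simpa [hS] using hqS
    have hsub : S ⊆ Finset.Iio q := by
      intro x hx
      rw [Finset.mem_Iio]
      by_contra hxq
      exact hqS' (hdown x hx q (le_of_not_gt hxq))
    have := Finset.card_le_card hsub
    rw [Fin.card_Iio, hcard] at this; omega

lemma orderEmbOfFin_le_apply {n k : ℕ} (s : Finset (Fin n)) (h : s.card = k) (q : Fin k) :
    (q : ℕ) ≤ ((s.orderEmbOfFin h q : Fin n) : ℕ) := by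
  by_contra hq
  push_neg at hq
  have h2 := (orderEmbOfFin_lt_iff s h (q : ℕ) q).1 hq
  have h3 : (s.filter fun x : Fin n => (x : ℕ) < (q : ℕ)).card ≤
      ((univ : Finset (Fin n)).filter fun x : Fin n => (x : ℕ) < (q : ℕ)).card :=
    Finset.card_le_card (Finset.filter_subset_filter _ (Finset.subset_univ s))
  have hqn : (q : ℕ) ≤ n := le_of_lt (lt_of_lt_of_le q.isLt (card_le_of_finset_fin s h))
  rw [card_filter_val_lt n hqn] at h3
  omega

lemma orderEmbOfFin_apply_le {n k : ℕ} (s : Finset (Fin n)) (h : s.card = k) (q : Fin k) :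
    ((s.orderEmbOfFin h q : Fin n) : ℕ) ≤ (q : ℕ) + (n - k) := by
  have hkn : k ≤ n := card_le_of_finset_fin s h
  have hv : (q : ℕ) + (n - k) + 1 ≤ n := by have := q.isLt; omega
  rw [← Nat.lt_succ_iff, Nat.succ_eq_add_one, orderEmbOfFin_lt_iff]
  have hsplit : ((univ : Finset (Fin n)).filter fun x : Fin n => (x : ℕ) < (q : ℕ) + (n - k) + 1)
      ⊆ (s.filter fun x : Fin n => (x : ℕ) < (q : ℕ) + (n - k) + 1) ∪ (univ \ s) := by
    intro x hx
    simp only [mem_filter, mem_union, mem_sdiff, mem_univ, true_and] at *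
    by_cases hxs : x ∈ s
    · exact Or.inl ⟨hxs, hx⟩
    · exact Or.inr hxs
  have h1 := Finset.card_le_card hsplit
  have h2 := Finset.card_union_le (s.filter fun x : Fin n => (x : ℕ) < (q : ℕ) + (n - k) + 1)
    (univ \ s)
  rw [card_filter_val_lt n hv] at h1
  have h3 : (univ \ s).card = n - k := by
    rw [Finset.card_sdiff_of_subset (Finset.subset_univ s)]; simp [h]
  have := q.isLt
  omega


variable {m₀ : ℕ}

/-- word condition: counts and compatibility with `r0`. -/
def Wcond (r0 : Fin m₀ → Fin m₀ → Prop) (μ : Fin m₀ → ℕ) {n : ℕ} (c : Fin n → Fin m₀) : Prop :=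
  (∀ i : Fin m₀, ((univ : Finset (Fin n)).filter fun p : Fin n => c p = i).card = μ i) ∧
  (∀ p q : Fin n, r0 (c p) (c q) → c p ≠ c q → p < q)

noncomputable def Wset (r0 : Fin m₀ → Fin m₀ → Prop) (μ : Fin m₀ → ℕ) (n : ℕ) :
    Finset (Fin n → Fin m₀) :=
  (univ : Finset (Fin n → Fin m₀)).filter (Wcond r0 μ)

lemma mem_Wset {r0 : Fin m₀ → Fin m₀ → Prop} {μ : Fin m₀ → ℕ} {n : ℕ} {c : Fin n → Fin m₀} :
    c ∈ Wset r0 μ n ↔ Wcond r0 μ c := by simp [Wset]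

/-- counting first components through an equivalence with `Fin n`. -/
lemma count_fst (μ : Fin m₀ → ℕ) {n : ℕ} (ψ : (Σ i : Fin m₀, Fin (μ i)) ≃ Fin n) (i : Fin m₀) :
    ((univ : Finset (Fin n)).filter fun p : Fin n => (ψ.symm p).1 = i).card = μ i := by
  rw [← Fintype.card_subtype]
  have e1 : {p : Fin n // (ψ.symm p).1 = i} ≃ {x : Σ j : Fin m₀, Fin (μ j) // x.1 = i} :=
    ψ.symm.subtypeEquiv (fun p => Iff.rfl)
  have e2 : {x : Σ j : Fin m₀, Fin (μ j) // x.1 = i} ≃ Fin (μ i) :=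
    { toFun := fun x => Fin.cast (congrArg μ x.2) x.1.2
      invFun := fun j => ⟨⟨i, j⟩, rfl⟩
      left_inv := by rintro ⟨⟨i', a⟩, h⟩; subst h; rfl
      right_inv := by intro j; rfl }
  rw [Fintype.card_congr (e1.trans e2), Fintype.card_fin]

lemma lplus_eq_card_Wset (r0 : Fin m₀ → Fin m₀ → Prop) (μ : Fin m₀ → ℕ) :
    Lplus m₀ r0 μ = (Wset r0 μ (∑ i, μ i)).card := by
  rw [Lplus, Nat.card_eq_fintype_card, Fintype.card_subtype]
  set n := ∑ i, μ i
  apply Finset.card_bij (fun φ _ => fun p : Fin n => ((φ : LexSumChains m₀ μ ≃ Fin n).symm p).1)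
  · -- maps into Wset
    intro φ hφ
    rw [mem_filter] at hφ
    obtain ⟨-, hlin⟩ := hφ
    rw [mem_Wset]
    constructor
    · intro i; exact count_fst μ φ i
    · intro p q hr hne
      have h1 : lexRel r0 μ (φ.symm p) (φ.symm q) := Or.inr ⟨hne, hr⟩
      have h2 := hlin _ _ h1
      simp only [Equiv.apply_symm_apply] at h2
      exact lt_of_le_of_ne h2 (fun hpq => hne (by rw [hpq]))
  · -- injective
    intro φ hφ φ' hφ' hw
    rw [mem_filter] at hφ hφ'
    have key : ∀ (ψ : LexSumChains m₀ μ ≃ Fin n), IsLin r0 μ ψ → ∀ (i : Fin m₀) (j : Fin (μ i)),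
        ψ ⟨i, j⟩ = ((univ : Finset (Fin n)).filter
          fun p : Fin n => (ψ.symm p).1 = i).orderEmbOfFin (count_fst μ ψ i) j := by
      intro ψ hψ i j
      have := Finset.orderEmbOfFin_unique (count_fst μ ψ i)
        (f := fun j : Fin (μ i) => ψ ⟨i, j⟩) (fun x => by simp) ?_
      · exact congrFun this j
      · intro a b hab
        have h1 : lexRel r0 μ ⟨i, a⟩ ⟨i, b⟩ := Or.inl ⟨rfl, le_of_lt (by exact_mod_cast hab)⟩
        refine lt_of_le_of_ne (hψ _ _ h1) fun hc => ?_
        have := ψ.injective hc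
        simp only [Sigma.mk.inj_iff, heq_eq_eq, true_and] at this
        exact absurd this (ne_of_lt hab)
    apply Equiv.ext
    rintro ⟨i, j⟩
    rw [key φ hφ.2 i j, key φ' hφ'.2 i j]
    have hsets : ∀ i : Fin m₀, ((univ : Finset (Fin n)).filter fun p : Fin n => (φ.symm p).1 = i)
        = ((univ : Finset (Fin n)).filter fun p : Fin n => (φ'.symm p).1 = i) := by
      intro i
      apply Finset.filter_congr
      intro p _
      rw [funext_iff] at hw
      simp [hw p]
    have huniq := Finset.orderEmbOfFin_unique (count_fst μ φ' i)
      (f := fun j : Fin (μ i) => ((univ : Finset (Fin n)).filter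
        fun p : Fin n => (φ.symm p).1 = i).orderEmbOfFin (count_fst μ φ i) j)
      (fun x => hsets i ▸ Finset.orderEmbOfFin_mem _ _ x)
      (((univ : Finset (Fin n)).filter
        fun p : Fin n => (φ.symm p).1 = i).orderEmbOfFin (count_fst μ φ i)).strictMono
    exact congrFun huniq j
  · -- surjective
    intro c hc
    rw [mem_Wset] at hc
    set P : ∀ i : Fin m₀, Finset (Fin n) :=
      fun i => (univ : Finset (Fin n)).filter fun p : Fin n => c p = i with hP
    have hmem : ∀ (i : Fin m₀) (j : Fin (μ i)), c ((P i).orderEmbOfFin (hc.1 i) j) = i := by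
      intro i j
      have := Finset.orderEmbOfFin_mem (P i) (hc.1 i) j
      exact (Finset.mem_filter.1 this).2
    set F : LexSumChains m₀ μ → Fin n := fun x => (P x.1).orderEmbOfFin (hc.1 x.1) x.2 with hF
    have hFinj : Function.Injective F := by
      rintro ⟨i, a⟩ ⟨i', b⟩ hab
      simp only [hF] at hab
      have hii' : i = i' := by
        have h1 := hmem i a
        have h2 := hmem i' b
        rw [hab] at h1; rw [h1] at h2; exact h2.symm ▸ rfl
      subst hii'
      have := ((P i).orderEmbOfFin (hc.1 i)).injective hab
      rw [this]
    have hFsurj : Function.Surjective F := by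
      intro p
      have hp : p ∈ P (c p) := by simp [hP]
      refine ⟨⟨c p, ((P (c p)).orderIsoOfFin (hc.1 (c p))).symm ⟨p, hp⟩⟩, ?_⟩
      simp only [hF]
      have : ((P (c p)).orderIsoOfFin (hc.1 (c p)))
          (((P (c p)).orderIsoOfFin (hc.1 (c p))).symm ⟨p, hp⟩) = ⟨p, hp⟩ :=
        OrderIso.apply_symm_apply _ _
      calc ((P (c p)).orderEmbOfFin (hc.1 (c p)))
            (((P (c p)).orderIsoOfFin (hc.1 (c p))).symm ⟨p, hp⟩)
          = (((P (c p)).orderIsoOfFin (hc.1 (c p)))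
            (((P (c p)).orderIsoOfFin (hc.1 (c p))).symm ⟨p, hp⟩) : Fin n) := rfl
        _ = p := by rw [this]
    set φ : LexSumChains m₀ μ ≃ Fin n := Equiv.ofBijective F ⟨hFinj, hFsurj⟩ with hφ
    have hφap : ∀ x, φ x = F x := fun x => rfl
    have hlin : IsLin r0 μ φ := by
      rintro x y (⟨h1, h2⟩ | ⟨h1, h2⟩)
      · obtain ⟨i, a⟩ := x
        obtain ⟨i', b⟩ := y
        simp only at h1
        subst h1
        simp only at h2
        rw [hφap, hφap]
        exact ((P i).orderEmbOfFin (hc.1 i)).monotone (by exact_mod_cast h2)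
      · rw [hφap, hφap]
        refine le_of_lt (hc.2 _ _ ?_ ?_)
        · rw [hmem x.1 x.2, hmem y.1 y.2]; exact h2
        · rw [hmem x.1 x.2, hmem y.1 y.2]; exact h1
    refine ⟨φ, by simp [hlin], ?_⟩
    funext p
    have h2 : F (φ.symm p) = p := by rw [← hφap]; exact φ.apply_symm_apply p
    have h3 : c (F (φ.symm p)) = (φ.symm p).1 := hmem (φ.symm p).1 (φ.symm p).2
    rw [h2] at h3
    exact h3.symm

section Chunk2
variable {m₀ : ℕ} (r0 : Fin m₀ → Fin m₀ → Prop) (i₀ : Fin m₀)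

noncomputable def Aset {N : ℕ} (d : Fin N → Fin m₀) : Finset (Fin N) :=
  (univ : Finset (Fin N)).filter fun q : Fin N => r0 (d q) i₀ ∧ d q ≠ i₀

noncomputable def Bset {N : ℕ} (d : Fin N → Fin m₀) : Finset (Fin N) :=
  (univ : Finset (Fin N)).filter fun q : Fin N => r0 i₀ (d q) ∧ d q ≠ i₀

noncomputable def aval {N : ℕ} (d : Fin N → Fin m₀) : ℕ :=
  if h : (Aset r0 i₀ d).Nonempty then ((Aset r0 i₀ d).max' h : ℕ) + 1 else 0

noncomputable def bval {N : ℕ} (d : Fin N → Fin m₀) : ℕ :=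
  if h : (Bset r0 i₀ d).Nonempty then ((Bset r0 i₀ d).min' h : ℕ) else N

noncomputable def gval {N : ℕ} (d : Fin N → Fin m₀) : ℕ :=
  bval r0 i₀ d - aval r0 i₀ d

noncomputable def compress {n N : ℕ} (c : Fin n → Fin m₀) : Fin N → Fin m₀ :=
  if h : ((univ : Finset (Fin n)).filter fun p : Fin n => c p ≠ i₀).card = N then
    fun q => c (((univ : Finset (Fin n)).filter fun p : Fin n => c p ≠ i₀).orderEmbOfFin h q)
  else fun _ => i₀

lemma compress_spec {n N : ℕ} (c : Fin n → Fin m₀)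
    (h : ((univ : Finset (Fin n)).filter fun p : Fin n => c p ≠ i₀).card = N) (q : Fin N) :
    compress i₀ c q
      = c (((univ : Finset (Fin n)).filter fun p : Fin n => c p ≠ i₀).orderEmbOfFin h q) := by
  rw [compress, dif_pos h]

lemma mem_Aset_lt_aval {N : ℕ} {d : Fin N → Fin m₀} {q : Fin N} (hq : q ∈ Aset r0 i₀ d) :
    (q : ℕ) < aval r0 i₀ d := by
  rw [aval, dif_pos ⟨q, hq⟩]
  have := Finset.le_max' (Aset r0 i₀ d) q hq
  exact Nat.lt_succ_of_le (by exact_mod_cast this)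

lemma mem_Bset_le_bval {N : ℕ} {d : Fin N → Fin m₀} {q : Fin N} (hq : q ∈ Bset r0 i₀ d) :
    bval r0 i₀ d ≤ (q : ℕ) := by
  rw [bval, dif_pos ⟨q, hq⟩]
  exact_mod_cast Finset.min'_le (Bset r0 i₀ d) q hq

lemma bval_le {N : ℕ} (d : Fin N → Fin m₀) : bval r0 i₀ d ≤ N := by
  rw [bval]
  split
  · exact le_of_lt (Fin.is_lt _)
  · exact le_refl N

lemma aval_le_bval (hr0 : IsPartialOrder (Fin m₀) r0) {N : ℕ} {μ0 : Fin m₀ → ℕ}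
    {d : Fin N → Fin m₀} (hd : Wcond r0 μ0 d) : aval r0 i₀ d ≤ bval r0 i₀ d := by
  haveI := hr0
  rw [aval]
  split
  · next hA =>
    set qa := (Aset r0 i₀ d).max' hA with hqa
    have hqa' : qa ∈ Aset r0 i₀ d := Finset.max'_mem _ _
    rw [Aset, mem_filter] at hqa'
    rw [bval]
    split
    · next hB =>
      set qb := (Bset r0 i₀ d).min' hB with hqb
      have hqb' : qb ∈ Bset r0 i₀ d := Finset.min'_mem _ _
      rw [Bset, mem_filter] at hqb'
      have hrab : r0 (d qa) (d qb) := Trans.trans hqa'.2.1 hqb'.2.1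
      have hne : d qa ≠ d qb := by
        intro hc
        exact hqa'.2.2 (Std.Antisymm.antisymm _ _ hqa'.2.1 (hc ▸ hqb'.2.1))
      have := hd.2 qa qb hrab hne
      exact_mod_cast this
    · have := Fin.is_lt qa
      omega
  · exact Nat.zero_le _

lemma no_i₀_of_count_zero {N : ℕ} {μ0 : Fin m₀ → ℕ} {d : Fin N → Fin m₀}
    (hd : Wcond r0 μ0 d) (h0 : μ0 i₀ = 0) (q : Fin N) : d q ≠ i₀ := by
  intro hc
  have h1 := hd.1 i₀
  rw [h0, Finset.card_eq_zero] at h1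
  have h2 : q ∈ ((univ : Finset (Fin N)).filter fun p : Fin N => d p = i₀) := by
    simp [hc]
  rw [h1] at h2
  exact absurd h2 (Finset.notMem_empty q)

/-- the interval of admissible insertion positions -/
noncomputable def Ival {N : ℕ} (d : Fin N → Fin m₀) (t : ℕ) : Finset (Fin (N + t)) :=
  (univ : Finset (Fin (N + t))).filter
    fun p : Fin (N + t) => aval r0 i₀ d ≤ (p : ℕ) ∧ (p : ℕ) < bval r0 i₀ d + t

lemma card_Ival (hr0 : IsPartialOrder (Fin m₀) r0) {N t : ℕ} {μ0 : Fin m₀ → ℕ}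
    {d : Fin N → Fin m₀} (hd : Wcond r0 μ0 d) :
    (Ival r0 i₀ d t).card = gval r0 i₀ d + t := by
  rw [Ival, card_filter_val_Ico]
  · rw [gval]
    have := aval_le_bval r0 i₀ hr0 hd
    omega
  · have := aval_le_bval r0 i₀ hr0 hd
    omega
  · have := bval_le r0 i₀ d
    omega

lemma orderEmbOfFin_congr {n k : ℕ} {s s' : Finset (Fin n)} (hss : s = s')
    (h : s.card = k) (h' : s'.card = k) (q : Fin k) :
    s.orderEmbOfFin h q = s'.orderEmbOfFin h' q := by subst hss; rfl

lemma card_ne_i₀ {N t : ℕ} {μt : Fin m₀ → ℕ} (ht : μt i₀ = t)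
    {c : Fin (N + t) → Fin m₀} (hc : Wcond r0 μt c) :
    ((univ : Finset (Fin (N + t))).filter fun p : Fin (N + t) => c p ≠ i₀).card = N := by
  have h1 : ((univ : Finset (Fin (N + t))).filter fun p : Fin (N + t) => c p ≠ i₀)
      = univ \ ((univ : Finset (Fin (N + t))).filter fun p : Fin (N + t) => c p = i₀) :=
    Finset.filter_not _ _
  rw [h1, Finset.card_sdiff_of_subset (Finset.filter_subset _ _), hc.1 i₀, ht, Finset.card_univ,
    Fintype.card_fin]
  omega

lemma fiber_card (hr0 : IsPartialOrder (Fin m₀) r0) {N t : ℕ} (μ0 μt : Fin m₀ → ℕ)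
    (h0 : μ0 i₀ = 0) (ht : μt i₀ = t) (hagree : ∀ i : Fin m₀, i ≠ i₀ → μ0 i = μt i)
    (d : Fin N → Fin m₀) (hd : Wcond r0 μ0 d) :
    ((Wset r0 μt (N + t)).filter fun c => compress i₀ c = d).card
      = (t + gval r0 i₀ d).choose t := by
  haveI := hr0
  have hno : ∀ q, d q ≠ i₀ := no_i₀_of_count_zero r0 i₀ hd h0
  have hab : aval r0 i₀ d ≤ bval r0 i₀ d := aval_le_bval r0 i₀ hr0 hd
  have hbN : bval r0 i₀ d ≤ N := bval_le r0 i₀ d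
  have hpow : (Finset.powersetCard t (Ival r0 i₀ d t)).card = (t + gval r0 i₀ d).choose t := by
    rw [Finset.card_powersetCard, card_Ival r0 i₀ hr0 hd, Nat.add_comm]
  rw [← hpow]
  have unpack : ∀ c ∈ (Wset r0 μt (N + t)).filter fun c => compress i₀ c = d,
      Wcond r0 μt c ∧ compress i₀ c = d :=
    fun c hc => ⟨mem_Wset.1 (Finset.mem_filter.1 hc).1, (Finset.mem_filter.1 hc).2⟩
  apply Finset.card_bij
    (fun c _ => (univ : Finset (Fin (N + t))).filter fun p : Fin (N + t) => c p = i₀)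
  · -- maps into powersetCard
    intro c hc
    obtain ⟨hcW, hcd⟩ := unpack c hc
    have hsc := card_ne_i₀ r0 i₀ ht hcW
    have hdq : ∀ q, d q = c (((univ : Finset (Fin (N + t))).filter
        fun p : Fin (N + t) => c p ≠ i₀).orderEmbOfFin hsc q) :=
      fun q => by rw [← hcd, compress_spec i₀ c hsc q]
    rw [Finset.mem_powersetCard]
    constructor
    · intro p hp
      have hp2 : c p = i₀ := (Finset.mem_filter.1 hp).2
      rw [Ival, Finset.mem_filter]
      refine ⟨Finset.mem_univ _, ?_, ?_⟩
      · by_cases hA : (Aset r0 i₀ d).Nonempty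
        · set qa := (Aset r0 i₀ d).max' hA with hqadef
          have hqa : qa ∈ Aset r0 i₀ d := Finset.max'_mem _ _
          rw [Aset, Finset.mem_filter] at hqa
          set e := ((univ : Finset (Fin (N + t))).filter
            fun p : Fin (N + t) => c p ≠ i₀).orderEmbOfFin hsc with hedef
          have h1 : c (e qa) = d qa := (hdq qa).symm
          have hlt : e qa < p := hcW.2 (e qa) p
            (by rw [h1, hp2]; exact hqa.2.1) (by rw [h1, hp2]; exact hqa.2.2)
          have h2 : (qa : ℕ) ≤ ((e qa : Fin (N + t)) : ℕ) := orderEmbOfFin_le_apply _ hsc qa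
          have h3 : ((e qa : Fin (N + t)) : ℕ) < (p : ℕ) := hlt
          rw [aval, dif_pos hA]
          omega
        · rw [aval, dif_neg hA]; exact Nat.zero_le _
      · by_cases hB : (Bset r0 i₀ d).Nonempty
        · set qb := (Bset r0 i₀ d).min' hB with hqbdef
          have hqb : qb ∈ Bset r0 i₀ d := Finset.min'_mem _ _
          rw [Bset, Finset.mem_filter] at hqb
          set e := ((univ : Finset (Fin (N + t))).filter
            fun p : Fin (N + t) => c p ≠ i₀).orderEmbOfFin hsc with hedef
          have h1 : c (e qb) = d qb := (hdq qb).symm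
          have hlt : p < e qb := hcW.2 p (e qb)
            (by rw [h1, hp2]; exact hqb.2.1) (by rw [h1, hp2]; exact fun hcc => hqb.2.2 hcc.symm)
          have h2 : ((e qb : Fin (N + t)) : ℕ) ≤ (qb : ℕ) + (N + t - N) :=
            orderEmbOfFin_apply_le _ hsc qb
          have h3 : (p : ℕ) < ((e qb : Fin (N + t)) : ℕ) := hlt
          rw [bval, dif_pos hB]
          omega
        · rw [bval, dif_neg hB]; exact p.isLt
    · rw [hcW.1 i₀, ht]
  · -- injective
    intro c hc c' hc' hTT
    obtain ⟨hcW, hcd⟩ := unpack c hc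
    obtain ⟨hcW', hcd'⟩ := unpack c' hc'
    have hsc := card_ne_i₀ r0 i₀ ht hcW
    have hsc' := card_ne_i₀ r0 i₀ ht hcW'
    have hiff : ∀ p, c p = i₀ ↔ c' p = i₀ := by
      intro p
      constructor
      · intro h
        have : p ∈ (univ : Finset (Fin (N + t))).filter
            fun p : Fin (N + t) => c p = i₀ := by simp [h]
        rw [hTT] at this
        exact (Finset.mem_filter.1 this).2
      · intro h
        have : p ∈ (univ : Finset (Fin (N + t))).filter
            fun p : Fin (N + t) => c' p = i₀ := by simp [h]
        rw [← hTT] at this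
        exact (Finset.mem_filter.1 this).2
    have hss : ((univ : Finset (Fin (N + t))).filter fun p : Fin (N + t) => c p ≠ i₀)
        = (univ : Finset (Fin (N + t))).filter fun p : Fin (N + t) => c' p ≠ i₀ := by
      ext p
      simp only [Finset.mem_filter, Finset.mem_univ, true_and]
      exact not_congr (hiff p)
    funext p
    by_cases hp : c p = i₀
    · rw [hp, ((hiff p).1 hp).symm]
    · have hp' : p ∈ ((univ : Finset (Fin (N + t))).filter
          fun p : Fin (N + t) => c p ≠ i₀) := by simp [hp]
      have : p ∈ Set.range (((univ : Finset (Fin (N + t))).filter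
          fun p : Fin (N + t) => c p ≠ i₀).orderEmbOfFin hsc) := by
        rw [Finset.range_orderEmbOfFin]; exact hp'
      obtain ⟨q, hq⟩ := this
      have e1 : c p = d q := by
        rw [← hq, ← compress_spec i₀ c hsc q, hcd]
      have e2 : c' p = d q := by
        have hq' : (((univ : Finset (Fin (N + t))).filter
            fun p : Fin (N + t) => c' p ≠ i₀).orderEmbOfFin hsc' q) = p := by
          rw [← orderEmbOfFin_congr hss hsc hsc' q]; exact hq
        rw [← hq', ← compress_spec i₀ c' hsc' q, hcd']
      rw [e1, e2]
  · -- surjective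
    intro T hT
    rw [Finset.mem_powersetCard] at hT
    obtain ⟨hTsub, hTcard⟩ := hT
    have hTsub' : ∀ p ∈ T, aval r0 i₀ d ≤ (p : ℕ) ∧ (p : ℕ) < bval r0 i₀ d + t :=
      fun p hp => (Finset.mem_filter.1 (hTsub hp)).2
    set sc : Finset (Fin (N + t)) := univ \ T with hscdef
    have hscc : sc.card = N := by
      rw [hscdef, Finset.card_sdiff_of_subset (Finset.subset_univ T), hTcard, Finset.card_univ,
        Fintype.card_fin]
      omega
    set e := sc.orderEmbOfFin hscc with hedef
    set c : Fin (N + t) → Fin m₀ := fun p =>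
      if hp : p ∈ T then i₀
      else d ((sc.orderIsoOfFin hscc).symm ⟨p, by simp [hscdef, hp]⟩) with hcdef
    have f1 : ∀ p ∈ T, c p = i₀ := fun p hp => by rw [hcdef]; exact dif_pos hp
    have f2 : ∀ q, c (e q) = d q := by
      intro q
      have hq1 : e q ∈ sc := Finset.orderEmbOfFin_mem sc hscc q
      have hq2 : e q ∉ T := (Finset.mem_sdiff.1 hq1).2
      rw [hcdef]
      simp only [dif_neg hq2]
      congr 1
      rw [OrderIso.symm_apply_eq]
      apply Subtype.ext
      rfl
    have f3 : ∀ p, p ∉ T → ∃ q, e q = p ∧ c p = d q := by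
      intro p hp
      have hps : p ∈ sc := Finset.mem_sdiff.2 ⟨Finset.mem_univ _, hp⟩
      have : p ∈ Set.range e := by rw [hedef, Finset.range_orderEmbOfFin]; exact hps
      obtain ⟨q, hq⟩ := this
      exact ⟨q, hq, by rw [← hq, f2]⟩
    have hiff : ∀ p, c p = i₀ ↔ p ∈ T := by
      intro p
      constructor
      · intro h
        by_contra hp
        obtain ⟨q, -, hcq⟩ := f3 p hp
        exact hno q (by rw [← hcq, h])
      · exact f1 p
    have fTeq : ((univ : Finset (Fin (N + t))).filter
        fun p : Fin (N + t) => c p = i₀) = T := by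
      ext p
      simp only [Finset.mem_filter, Finset.mem_univ, true_and]
      exact hiff p
    have hcW : Wcond r0 μt c := by
      constructor
      · intro i
        by_cases hi : i = i₀
        · subst hi; rw [fTeq, hTcard, ht]
        · rw [← hagree i hi, ← hd.1 i]
          symm
          apply Finset.card_bij (fun q _ => e q)
          · intro q hq
            have : d q = i := (Finset.mem_filter.1 hq).2
            simp [f2 q, this]
          · intro q1 _ q2 _ h12; exact e.injective h12
          · intro p hp
            have hpi : c p = i := (Finset.mem_filter.1 hp).2
            have hpT : p ∉ T := fun hc' => hi (by rw [← hpi, f1 p hc'])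
            obtain ⟨q, hq, hcq⟩ := f3 p hpT
            exact ⟨q, by simp [← hcq, hpi], hq⟩
      · intro p p' hr hne
        by_cases hp : p ∈ T
        · by_cases hp' : p' ∈ T
          · exact absurd (by rw [f1 p hp, f1 p' hp']) hne
          · obtain ⟨q', hq', hcq'⟩ := f3 p' hp'
            have hqB : q' ∈ Bset r0 i₀ d := by
              rw [Bset, Finset.mem_filter]
              refine ⟨Finset.mem_univ _, ?_, ?_⟩
              · rw [← hcq', ← f1 p hp]; exact hr
              · rw [← hcq']; intro hcc; exact hne (by rw [f1 p hp, hcc])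
            have hbq : bval r0 i₀ d ≤ (q' : ℕ) := mem_Bset_le_bval r0 i₀ hqB
            have hclaim : bval r0 i₀ d + t ≤ ((e q' : Fin (N + t)) : ℕ) := by
              by_contra hcl
              push_neg at hcl
              rw [hedef, orderEmbOfFin_lt_iff] at hcl
              have hcomp : sc.filter (fun x : Fin (N + t) => (x : ℕ) < bval r0 i₀ d + t)
                  = ((univ : Finset (Fin (N + t))).filter
                    fun x : Fin (N + t) => (x : ℕ) < bval r0 i₀ d + t) \ T := by
                ext x
                simp only [hscdef, Finset.mem_filter, Finset.mem_sdiff, Finset.mem_univ,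
                  true_and]
                tauto
              have hTsub2 : T ⊆ (univ : Finset (Fin (N + t))).filter
                  fun x : Fin (N + t) => (x : ℕ) < bval r0 i₀ d + t := by
                intro x hx
                simp only [Finset.mem_filter, Finset.mem_univ, true_and]
                exact (hTsub' x hx).2
              rw [hcomp, Finset.card_sdiff_of_subset hTsub2, hTcard,
                card_filter_val_lt (N + t) (by omega)] at hcl
              omega
            have h1 : (p : ℕ) < bval r0 i₀ d + t := (hTsub' p hp).2
            have : (p : ℕ) < ((e q' : Fin (N + t)) : ℕ) := by omega
            rw [hq'] at this
            exact this
        · by_cases hp' : p' ∈ T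
          · obtain ⟨q, hq, hcq⟩ := f3 p hp
            have hqA : q ∈ Aset r0 i₀ d := by
              rw [Aset, Finset.mem_filter]
              refine ⟨Finset.mem_univ _, ?_, ?_⟩
              · rw [← hcq, ← f1 p' hp']; exact hr
              · rw [← hcq]; intro hcc; exact hne (by rw [f1 p' hp', hcc])
            have haq : (q : ℕ) < aval r0 i₀ d := mem_Aset_lt_aval r0 i₀ hqA
            have hclaim : ((e q : Fin (N + t)) : ℕ) < aval r0 i₀ d := by
              rw [hedef, orderEmbOfFin_lt_iff]
              have hcomp : sc.filter (fun x : Fin (N + t) => (x : ℕ) < aval r0 i₀ d)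
                  = (univ : Finset (Fin (N + t))).filter
                    fun x : Fin (N + t) => (x : ℕ) < aval r0 i₀ d := by
                ext x
                simp only [hscdef, Finset.mem_filter, Finset.mem_sdiff, Finset.mem_univ,
                  true_and]
                constructor
                · tauto
                · intro hx
                  refine ⟨fun hxT => ?_, hx⟩
                  have := (hTsub' x hxT).1
                  omega
              rw [hcomp, card_filter_val_lt (N + t) (by omega)]
              exact haq
            have h1 : aval r0 i₀ d ≤ (p' : ℕ) := (hTsub' p' hp').1
            have : ((e q : Fin (N + t)) : ℕ) < (p' : ℕ) := by omega
            rw [hq] at this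
            exact this
          · obtain ⟨q, hq, hcq⟩ := f3 p hp
            obtain ⟨q', hq', hcq'⟩ := f3 p' hp'
            have : q < q' := hd.2 q q' (by rw [← hcq, ← hcq']; exact hr)
              (by rw [← hcq, ← hcq']; exact hne)
            have := e.strictMono this
            rw [hq, hq'] at this
            exact this
    have hseq : ((univ : Finset (Fin (N + t))).filter
        fun p : Fin (N + t) => c p ≠ i₀) = sc := by
      ext p
      simp only [Finset.mem_filter, Finset.mem_univ, true_and, hscdef, Finset.mem_sdiff]
      exact not_congr (hiff p)
    have hsc2 : ((univ : Finset (Fin (N + t))).filter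
        fun p : Fin (N + t) => c p ≠ i₀).card = N := by rw [hseq]; exact hscc
    have hcompress : compress i₀ c = d := by
      funext q
      rw [compress_spec i₀ c hsc2 q, orderEmbOfFin_congr hseq hsc2 hscc q]
      exact f2 q
    exact ⟨c, Finset.mem_filter.2 ⟨mem_Wset.2 hcW, hcompress⟩, fTeq⟩

lemma compress_mem_Wset (hr0 : IsPartialOrder (Fin m₀) r0) {N t : ℕ} (μ0 μt : Fin m₀ → ℕ)
    (h0 : μ0 i₀ = 0) (ht : μt i₀ = t) (hagree : ∀ i : Fin m₀, i ≠ i₀ → μ0 i = μt i)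
    {c : Fin (N + t) → Fin m₀} (hc : Wcond r0 μt c) :
    (compress i₀ c : Fin N → Fin m₀) ∈ Wset r0 μ0 N := by
  have hsc := card_ne_i₀ r0 i₀ ht hc
  set s : Finset (Fin (N + t)) :=
    (univ : Finset (Fin (N + t))).filter fun p : Fin (N + t) => c p ≠ i₀ with hsdef
  set e := s.orderEmbOfFin hsc with hedef
  have hcs : ∀ q : Fin N, (compress i₀ c : Fin N → Fin m₀) q = c (e q) :=
    fun q => compress_spec i₀ c hsc q
  have hmemne : ∀ q : Fin N, c (e q) ≠ i₀ := by
    intro q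
    have := Finset.orderEmbOfFin_mem s hsc q
    exact (Finset.mem_filter.1 this).2
  rw [mem_Wset]
  constructor
  · intro i
    by_cases hi : i = i₀
    · subst hi
      rw [h0, Finset.card_eq_zero]
      apply Finset.eq_empty_of_forall_notMem
      intro q hq
      exact hmemne q (by rw [← hcs q]; exact (Finset.mem_filter.1 hq).2)
    · have hbij : ((univ : Finset (Fin N)).filter
          fun q : Fin N => (compress i₀ c : Fin N → Fin m₀) q = i).card
          = ((univ : Finset (Fin (N + t))).filter
            fun p : Fin (N + t) => c p = i).card := by
        apply Finset.card_bij (fun q _ => (e q : Fin (N + t)))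
        · intro q hq
          have := (Finset.mem_filter.1 hq).2
          rw [hcs q] at this
          simp [this]
        · intro q1 _ q2 _ h12; exact e.injective h12
        · intro p hp
          have hpi : c p = i := (Finset.mem_filter.1 hp).2
          have hps : p ∈ s := by rw [hsdef]; simp [hpi, hi]
          have : p ∈ Set.range e := by rw [hedef, Finset.range_orderEmbOfFin]; exact hps
          obtain ⟨q, hq⟩ := this
          exact ⟨q, by simp [hcs q, hq, hpi], hq⟩
      rw [hbij, hc.1 i, hagree i hi]
  · intro q q' hr hne
    rw [hcs q, hcs q'] at hr hne
    have := hc.2 (e q) (e q') hr hne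
    exact e.strictMono.lt_iff_lt.1 this

lemma card_Wset_eq_sum (hr0 : IsPartialOrder (Fin m₀) r0) {N t : ℕ} (μ0 μt : Fin m₀ → ℕ)
    (h0 : μ0 i₀ = 0) (ht : μt i₀ = t) (hagree : ∀ i : Fin m₀, i ≠ i₀ → μ0 i = μt i) :
    (Wset r0 μt (N + t)).card = ∑ d ∈ Wset r0 μ0 N, (t + gval r0 i₀ d).choose t := by
  rw [Finset.card_eq_sum_card_fiberwise
    (f := fun c : Fin (N + t) → Fin m₀ => (compress i₀ c : Fin N → Fin m₀))
    (t := Wset r0 μ0 N)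
    (fun c hc => compress_mem_Wset r0 i₀ hr0 μ0 μt h0 ht hagree (mem_Wset.1 hc))]
  apply Finset.sum_congr rfl
  intro d hd
  exact fiber_card r0 i₀ hr0 μ0 μt h0 ht hagree d (mem_Wset.1 hd)

lemma count_in {N : ℕ} {μ0 : Fin m₀ → ℕ} {d : Fin N → Fin m₀} (hd : Wcond r0 μ0 d)
    (K : Finset (Fin m₀)) :
    ((univ : Finset (Fin N)).filter fun q : Fin N => d q ∈ K).card = ∑ i ∈ K, μ0 i := by
  rw [Finset.card_eq_sum_card_fiberwise (f := d) (t := K)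
    (s := (univ : Finset (Fin N)).filter fun q : Fin N => d q ∈ K)
    (fun q hq => (Finset.mem_filter.1 hq).2)]
  apply Finset.sum_congr rfl
  intro i hi
  rw [← hd.1 i]
  congr 1
  ext q
  simp only [Finset.mem_filter, Finset.mem_univ, true_and]
  constructor
  · rintro ⟨-, h⟩; exact h
  · intro h; exact ⟨h ▸ hi, h⟩

lemma gval_le (hr0 : IsPartialOrder (Fin m₀) r0) {N : ℕ} {μ0 : Fin m₀ → ℕ}
    {d : Fin N → Fin m₀} (hd : Wcond r0 μ0 d) (h0 : μ0 i₀ = 0) :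
    gval r0 i₀ d ≤
      ∑ i ∈ (univ : Finset (Fin m₀)).filter
        (fun i : Fin m₀ => i ≠ i₀ ∧ ¬ r0 i i₀ ∧ ¬ r0 i₀ i), μ0 i := by
  have hno : ∀ q, d q ≠ i₀ := no_i₀_of_count_zero r0 i₀ hd h0
  have hab : aval r0 i₀ d ≤ bval r0 i₀ d := aval_le_bval r0 i₀ hr0 hd
  have hbN : bval r0 i₀ d ≤ N := bval_le r0 i₀ d
  set K := (univ : Finset (Fin m₀)).filter
    (fun i : Fin m₀ => i ≠ i₀ ∧ ¬ r0 i i₀ ∧ ¬ r0 i₀ i) with hK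
  have h1 : ((univ : Finset (Fin N)).filter
      fun q : Fin N => aval r0 i₀ d ≤ (q : ℕ) ∧ (q : ℕ) < bval r0 i₀ d).card
      = bval r0 i₀ d - aval r0 i₀ d := card_filter_val_Ico N hab hbN
  have h2 : ((univ : Finset (Fin N)).filter
      fun q : Fin N => aval r0 i₀ d ≤ (q : ℕ) ∧ (q : ℕ) < bval r0 i₀ d)
      ⊆ (univ : Finset (Fin N)).filter fun q : Fin N => d q ∈ K := by
    intro q hq
    obtain ⟨-, hq1, hq2⟩ := Finset.mem_filter.1 hq
    rw [Finset.mem_filter]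
    refine ⟨Finset.mem_univ _, ?_⟩
    rw [hK, Finset.mem_filter]
    refine ⟨Finset.mem_univ _, hno q, ?_, ?_⟩
    · intro hr
      have : q ∈ Aset r0 i₀ d := by rw [Aset, Finset.mem_filter]; exact ⟨Finset.mem_univ _, hr, hno q⟩
      have := mem_Aset_lt_aval r0 i₀ this
      omega
    · intro hr
      have : q ∈ Bset r0 i₀ d := by rw [Bset, Finset.mem_filter]; exact ⟨Finset.mem_univ _, hr, hno q⟩
      have := mem_Bset_le_bval r0 i₀ this
      omega
  have h3 := Finset.card_le_card h2
  rw [h1, count_in r0 hd K] at h3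
  rw [gval]
  exact h3

noncomputable def pol (g : ℕ) : Polynomial ℚ :=
  Polynomial.C ((g.factorial : ℚ)⁻¹) *
    ∏ j ∈ Finset.range g, (Polynomial.X + Polynomial.C ((j : ℚ) + 1))

lemma prod_asc (t g : ℕ) : ∏ j ∈ Finset.range g, (t + 1 + j) = (t + 1).ascFactorial g := by
  induction g with
  | zero => simp
  | succ g ih =>
    rw [Finset.prod_range_succ, ih, Nat.ascFactorial_succ]
    ring

lemma pol_eval (g t : ℕ) : (pol g).eval (t : ℚ) = ((t + g).choose t : ℚ) := by
  rw [pol, Polynomial.eval_mul, Polynomial.eval_C, Polynomial.eval_prod]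
  simp only [Polynomial.eval_add, Polynomial.eval_X, Polynomial.eval_C]
  have h1 : ∏ j ∈ Finset.range g, ((t : ℚ) + ((j : ℚ) + 1)) = ((t + 1).ascFactorial g : ℚ) := by
    rw [← prod_asc]
    push_cast
    apply Finset.prod_congr rfl
    intro j _
    ring
  rw [h1, Nat.ascFactorial_eq_factorial_mul_choose]
  have h2 : (t + g).choose t = (t + g).choose g := Nat.choose_symm_add
  rw [h2]
  push_cast
  have h3 : (g.factorial : ℚ) ≠ 0 := Nat.cast_ne_zero.2 g.factorial_ne_zero
  field_simp

lemma polprod_monic (g : ℕ) :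
    (∏ j ∈ Finset.range g, (Polynomial.X + Polynomial.C ((j : ℚ) + 1))).Monic :=
  Polynomial.monic_prod_of_monic _ _ fun j _ => Polynomial.monic_X_add_C _

lemma polprod_natDegree (g : ℕ) :
    (∏ j ∈ Finset.range g, (Polynomial.X + Polynomial.C ((j : ℚ) + 1))).natDegree = g := by
  rw [Polynomial.natDegree_prod _ _ fun j _ => Polynomial.X_add_C_ne_zero _]
  rw [Finset.sum_congr rfl
    (fun j _ => Polynomial.natDegree_X_add_C ((j : ℚ) + 1) : ∀ j ∈ Finset.range g, _)]
  rw [Finset.sum_const, smul_eq_mul, mul_one, Finset.card_range]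

lemma pol_natDegree (g : ℕ) : (pol g).natDegree = g := by
  rw [pol, Polynomial.natDegree_C_mul
    (inv_ne_zero (Nat.cast_ne_zero.2 g.factorial_ne_zero)), polprod_natDegree]

lemma pol_coeff_self (g : ℕ) : (pol g).coeff g = (g.factorial : ℚ)⁻¹ := by
  rw [pol, Polynomial.coeff_C_mul]
  have h1 := (polprod_monic g).coeff_natDegree
  rw [polprod_natDegree] at h1
  rw [h1, mul_one]

lemma exists_max_word (hr0 : IsPartialOrder (Fin m₀) r0) (μ0 : Fin m₀ → ℕ) (h0 : μ0 i₀ = 0)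
    {N : ℕ} (hN : ∑ i, μ0 i = N) :
    ∃ d : Fin N → Fin m₀, Wcond r0 μ0 d ∧ gval r0 i₀ d =
      ∑ i ∈ (univ : Finset (Fin m₀)).filter
        (fun i : Fin m₀ => i ≠ i₀ ∧ ¬ r0 i i₀ ∧ ¬ r0 i₀ i), μ0 i := by
  haveI := hr0
  classical
  set cls : Fin m₀ → ℕ := fun i =>
    if r0 i i₀ ∧ i ≠ i₀ then 0 else if r0 i₀ i ∧ i ≠ i₀ then 2 else 1 with hclsdef
  have cls0 : ∀ i, cls i = 0 ↔ (r0 i i₀ ∧ i ≠ i₀) := by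
    intro i
    simp only [hclsdef]
    split_ifs with h1 h2
    · simp [h1]
    · simp [h1]
    · simp [h1]
  have cls2 : ∀ i, cls i = 2 ↔ (r0 i₀ i ∧ i ≠ i₀) := by
    intro i
    simp only [hclsdef]
    split_ifs with h1 h2
    · simp only [show (0 : ℕ) ≠ 2 by omega, false_iff]
      intro hc
      exact h1.2 (Std.Antisymm.antisymm _ _ h1.1 hc.1)
    · simp [h2]
    · simp [h2]
  have cls_cases : ∀ i, cls i = 0 ∨ cls i = 1 ∨ cls i = 2 := by
    intro i; simp only [hclsdef]; split_ifs <;> simp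
  have cls_mono : ∀ i j, r0 i j → cls i ≤ cls j := by
    intro i j hr
    rcases cls_cases j with hj | hj | hj
    · have hj' := (cls0 j).1 hj
      have h1 : r0 i i₀ := Trans.trans hr hj'.1
      have h2 : i ≠ i₀ := by
        intro hc
        subst hc
        exact hj'.2 (Std.Antisymm.antisymm _ _ hj'.1 hr)
      rw [(cls0 i).2 ⟨h1, h2⟩, hj]
    · rw [hj]
      rcases cls_cases i with hi | hi | hi
      · omega
      · omega
      · exfalso
        have hi' := (cls2 i).1 hi
        have h1 : r0 i₀ j := Trans.trans hi'.1 hr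
        have h2 : j ≠ i₀ := by
          intro hc
          subst hc
          exact hi'.2 (Std.Antisymm.antisymm _ _ hr hi'.1)
        rw [(cls2 j).2 ⟨h1, h2⟩] at hj
        omega
    · rw [hj]
      rcases cls_cases i with hi | hi | hi <;> omega
  set r1 : Fin m₀ → Fin m₀ → Prop :=
    fun i j => cls i < cls j ∨ (cls i = cls j ∧ r0 i j) with hr1def
  haveI hr1 : IsPartialOrder (Fin m₀) r1 :=
    { refl := fun i => Or.inr ⟨rfl, Std.Refl.refl i⟩
      trans := by
        rintro a b c (h1 | ⟨h1, h1'⟩) (h2 | ⟨h2, h2'⟩)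
        · exact Or.inl (lt_trans h1 h2)
        · exact Or.inl (h2 ▸ h1)
        · exact Or.inl (h1 ▸ h2)
        · exact Or.inr ⟨h1.trans h2, Trans.trans h1' h2'⟩
      antisymm := by
        rintro a b (h1 | ⟨h1, h1'⟩) (h2 | ⟨h2, h2'⟩)
        · omega
        · omega
        · omega
        · exact Std.Antisymm.antisymm _ _ h1' h2' }
  obtain ⟨s, hslin, hs⟩ := extend_partialOrder r1
  haveI := hslin
  set rank : Fin m₀ → ℕ :=
    fun i => ((univ : Finset (Fin m₀)).filter fun j : Fin m₀ => s j i ∧ j ≠ i).card with hrankdef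
  have hrank : ∀ i j, s i j → i ≠ j → rank i < rank j := by
    intro i j hij hne
    apply Finset.card_lt_card
    rw [Finset.ssubset_iff_of_subset]
    · refine ⟨i, by simp [hij, hne], by simp⟩
    · intro x hx
      obtain ⟨-, hx1, hx2⟩ := Finset.mem_filter.1 hx
      rw [Finset.mem_filter]
      refine ⟨Finset.mem_univ _, Trans.trans hx1 hij, ?_⟩
      intro hc
      subst hc
      exact hne (Std.Antisymm.antisymm _ _ hij hx1)
  have hμle : ∀ i, μ0 i ≤ N := by
    intro i
    rw [← hN]
    exact Finset.single_le_sum (fun _ _ => Nat.zero_le _) (Finset.mem_univ i)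
  set key : (Σ i : Fin m₀, Fin (μ0 i)) → ℕ :=
    fun x => rank x.1 * (N + 1) + (x.2 : ℕ) with hkeydef
  have hkeyinj : Function.Injective key := by
    rintro ⟨i, a⟩ ⟨j, b⟩ h
    simp only [hkeydef] at h
    by_cases hij : i = j
    · subst hij
      have : (a : ℕ) = (b : ℕ) := by omega
      rw [Fin.ext this]
    · exfalso
      have ha : (a : ℕ) < N + 1 := lt_of_lt_of_le a.isLt (Nat.le_succ_of_le (hμle i))
      have hb : (b : ℕ) < N + 1 := lt_of_lt_of_le b.isLt (Nat.le_succ_of_le (hμle j))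
      rcases Std.Total.total (r := s) i j with hij' | hij'
      · have := hrank i j hij' hij
        nlinarith
      · have := hrank j i hij' (Ne.symm hij)
        nlinarith
  have hcard : (univ : Finset (Σ i : Fin m₀, Fin (μ0 i))).card = N := by
    rw [Finset.card_univ]
    simp [Fintype.card_sigma, hN]
  set s' : Finset ℕ := (univ : Finset (Σ i : Fin m₀, Fin (μ0 i))).image key with hs'def
  have hs'card : s'.card = N := by
    rw [hs'def, Finset.card_image_of_injective _ hkeyinj, hcard]
  set emb := s'.orderEmbOfFin hs'card with hembdef
  have hembmem : ∀ p : Fin N, ∃ x : Σ i : Fin m₀, Fin (μ0 i), key x = emb p := by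
    intro p
    have := Finset.orderEmbOfFin_mem s' hs'card p
    obtain ⟨x, -, hx⟩ := Finset.mem_image.1 this
    exact ⟨x, hx⟩
  set ψ : Fin N → (Σ i : Fin m₀, Fin (μ0 i)) := fun p => Classical.choose (hembmem p) with hψdef
  have hψkey : ∀ p, key (ψ p) = emb p := fun p => Classical.choose_spec (hembmem p)
  have hψinj : Function.Injective ψ := by
    intro p q h
    have : emb p = emb q := by rw [← hψkey p, ← hψkey q, h]
    exact emb.injective this
  have hψsurj : Function.Surjective ψ := by
    intro x
    have hx : key x ∈ s' := by rw [hs'def]; exact Finset.mem_image_of_mem key (Finset.mem_univ x)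
    have : key x ∈ Set.range emb := by rw [hembdef, Finset.range_orderEmbOfFin]; exact hx
    obtain ⟨p, hp⟩ := this
    refine ⟨p, hkeyinj ?_⟩
    rw [hψkey p, hp]
  set eψ : Fin N ≃ (Σ i : Fin m₀, Fin (μ0 i)) := Equiv.ofBijective ψ ⟨hψinj, hψsurj⟩ with heψdef
  set d : Fin N → Fin m₀ := fun p => (ψ p).1 with hddef
  have hcounts : ∀ i : Fin m₀,
      ((univ : Finset (Fin N)).filter fun p : Fin N => d p = i).card = μ0 i := by
    intro i
    have h1 := count_fst μ0 eψ.symm i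
    have h2 : ∀ p : Fin N, (eψ.symm.symm p).1 = d p := by
      intro p
      rw [Equiv.symm_symm]
      try rfl
    rw [← h1]
    congr 1
    try (ext p; simp only [Finset.mem_filter, Finset.mem_univ, true_and, h2 p])
  have horder : ∀ p q : Fin N, s (d p) (d q) → d p ≠ d q → p < q := by
    intro p q hsd hne
    have hr := hrank (d p) (d q) hsd hne
    have hkeylt : key (ψ p) < key (ψ q) := by
      have ha : ((ψ p).2 : ℕ) < N + 1 :=
        lt_of_lt_of_le (ψ p).2.isLt (Nat.le_succ_of_le (hμle (ψ p).1))
      have hr' : rank (ψ p).fst < rank (ψ q).fst := hr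
      simp only [hkeydef]
      nlinarith
    have : emb p < emb q := by rw [← hψkey p, ← hψkey q]; exact hkeylt
    exact emb.strictMono.lt_iff_lt.1 this
  have hr1s : ∀ i j, r1 i j → s i j := fun i j h => hs i j h
  have hd : Wcond r0 μ0 d := by
    constructor
    · exact hcounts
    · intro p q hr hne
      apply horder p q _ hne
      apply hr1s
      rcases lt_or_eq_of_le (cls_mono _ _ hr) with h | h
      · exact Or.inl h
      · exact Or.inr ⟨h, hr⟩
  have hclsorder : ∀ p q : Fin N, cls (d p) < cls (d q) → p < q := by
    intro p q h
    apply horder p q (hr1s _ _ (Or.inl h))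
    intro hc
    rw [hc] at h
    omega
  refine ⟨d, hd, ?_⟩
  -- now compute gval
  set K := (univ : Finset (Fin m₀)).filter
    (fun i : Fin m₀ => i ≠ i₀ ∧ ¬ r0 i i₀ ∧ ¬ r0 i₀ i) with hKdef
  have hno : ∀ q, d q ≠ i₀ := no_i₀_of_count_zero r0 i₀ hd h0
  have hA_eq : Aset r0 i₀ d
      = (univ : Finset (Fin N)).filter fun q : Fin N => cls (d q) = 0 := by
    ext q
    rw [Aset, Finset.mem_filter, Finset.mem_filter]
    simp only [Finset.mem_univ, true_and]
    rw [cls0]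
  have hB_eq : Bset r0 i₀ d
      = (univ : Finset (Fin N)).filter fun q : Fin N => cls (d q) = 2 := by
    ext q
    rw [Bset, Finset.mem_filter, Finset.mem_filter]
    simp only [Finset.mem_univ, true_and]
    rw [cls2]
  have hcls1 : ∀ i : Fin m₀, cls i = 1 ↔ (i = i₀ ∨ i ∈ K) := by
    intro i
    have := cls_cases i
    rw [hKdef]
    simp only [Finset.mem_filter, Finset.mem_univ, true_and]
    constructor
    · intro h1
      by_cases hi : i = i₀
      · exact Or.inl hi
      · refine Or.inr ⟨hi, ?_, ?_⟩
        · intro hr; rw [(cls0 i).2 ⟨hr, hi⟩] at h1; omega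
        · intro hr; rw [(cls2 i).2 ⟨hr, hi⟩] at h1; omega
    · rintro (hi | ⟨hi1, hi2, hi3⟩)
      · have h1 : ¬ cls i = 0 := fun hc => ((cls0 i).1 hc).2 hi
        have h2 : ¬ cls i = 2 := fun hc => ((cls2 i).1 hc).2 hi
        omega
      · have h1 : ¬ cls i = 0 := fun hc => hi2 ((cls0 i).1 hc).1
        have h2 : ¬ cls i = 2 := fun hc => hi3 ((cls2 i).1 hc).1
        omega
  -- cardinalities of the three blocks
  have hcount_cls : ∀ v : ℕ,
      ((univ : Finset (Fin N)).filter fun q : Fin N => cls (d q) = v).card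
        = ∑ i ∈ (univ : Finset (Fin m₀)).filter (fun i => cls i = v), μ0 i := by
    intro v
    have h1 : ((univ : Finset (Fin N)).filter fun q : Fin N => cls (d q) = v)
        = (univ : Finset (Fin N)).filter
          fun q : Fin N => d q ∈ (univ : Finset (Fin m₀)).filter (fun i => cls i = v) := by
      ext q; simp
    rw [h1, count_in r0 hd]
  have hK1sum : ∑ i ∈ (univ : Finset (Fin m₀)).filter (fun i => cls i = 1), μ0 i
      = ∑ i ∈ K, μ0 i := by
    have h1 : (univ : Finset (Fin m₀)).filter (fun i => cls i = 1) = insert i₀ K := by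
      ext i
      simp only [Finset.mem_filter, Finset.mem_univ, true_and, Finset.mem_insert]
      rw [hcls1]
    have h2 : i₀ ∉ K := by rw [hKdef]; simp
    rw [h1, Finset.sum_insert h2, h0, Nat.zero_add]
  have hsplit : ∑ i ∈ (univ : Finset (Fin m₀)).filter (fun i => cls i = 0), μ0 i
      + ∑ i ∈ (univ : Finset (Fin m₀)).filter (fun i => cls i = 1), μ0 i
      + ∑ i ∈ (univ : Finset (Fin m₀)).filter (fun i => cls i = 2), μ0 i = N := by
    have e1 := Finset.sum_filter_add_sum_filter_not
      (univ : Finset (Fin m₀)) (fun i => cls i = 0) μ0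
    have e2 := Finset.sum_filter_add_sum_filter_not
      ((univ : Finset (Fin m₀)).filter (fun i => ¬ cls i = 0)) (fun i => cls i = 1) μ0
    have e3 : ((univ : Finset (Fin m₀)).filter (fun i => ¬ cls i = 0)).filter
        (fun i => cls i = 1) = (univ : Finset (Fin m₀)).filter (fun i => cls i = 1) := by
      ext i
      simp only [Finset.mem_filter, Finset.mem_univ, true_and]
      constructor
      · rintro ⟨-, h2⟩; exact h2
      · intro h; exact ⟨by omega, h⟩
    have e4 : ((univ : Finset (Fin m₀)).filter (fun i => ¬ cls i = 0)).filter
        (fun i => ¬ cls i = 1) = (univ : Finset (Fin m₀)).filter (fun i => cls i = 2) := by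
      ext i
      simp only [Finset.mem_filter, Finset.mem_univ, true_and]
      rcases cls_cases i with h | h | h
      · constructor
        · rintro ⟨h1, -⟩; omega
        · intro h1; omega
      · constructor
        · rintro ⟨-, h2⟩; omega
        · intro h1; omega
      · constructor
        · rintro ⟨-, -⟩; exact h
        · intro h1; exact ⟨by omega, by omega⟩
    rw [e3, e4] at e2
    rw [← hN, ← e1, ← e2]
    ring
  -- aval = |A|
  have haval : aval r0 i₀ d = (Aset r0 i₀ d).card := by
    rw [aval]
    split
    · next hA =>
      set qa := (Aset r0 i₀ d).max' hA with hqadef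
      have hqa : qa ∈ Aset r0 i₀ d := Finset.max'_mem _ _
      have hmemiff : ∀ p : Fin N, p ∈ Aset r0 i₀ d ↔ (p : ℕ) < (qa : ℕ) + 1 := by
        intro p
        constructor
        · intro hp
          have := Finset.le_max' _ p hp
          rw [← hqadef] at this
          exact_mod_cast Nat.lt_succ_of_le (by exact_mod_cast this)
        · intro hp
          by_contra hpA
          have h1 : cls (d qa) = 0 := by
            rw [hA_eq, Finset.mem_filter] at hqa; exact hqa.2
          have h2 : cls (d p) ≠ 0 := by
            rw [hA_eq, Finset.mem_filter] at hpA
            intro hc; exact hpA ⟨Finset.mem_univ _, hc⟩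
          have h3 : cls (d qa) < cls (d p) := by omega
          have := hclsorder qa p h3
          have : (qa : ℕ) < (p : ℕ) := this
          omega
      have hAfilter : Aset r0 i₀ d
          = (univ : Finset (Fin N)).filter fun p : Fin N => (p : ℕ) < (qa : ℕ) + 1 := by
        ext p
        rw [Finset.mem_filter]
        simp only [Finset.mem_univ, true_and]
        exact hmemiff p
      rw [hAfilter, card_filter_val_lt N (by have := qa.isLt; omega)]
    · next hA =>
      rw [Finset.not_nonempty_iff_eq_empty.1 hA]
      simp
  -- bval + |B| = N
  have hbval : bval r0 i₀ d + (Bset r0 i₀ d).card = N := by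
    rw [bval]
    split
    · next hB =>
      set qb := (Bset r0 i₀ d).min' hB with hqbdef
      have hqb : qb ∈ Bset r0 i₀ d := Finset.min'_mem _ _
      have hmemiff : ∀ p : Fin N, p ∈ Bset r0 i₀ d ↔ (qb : ℕ) ≤ (p : ℕ) := by
        intro p
        constructor
        · intro hp
          have := Finset.min'_le _ p hp
          rw [← hqbdef] at this
          exact_mod_cast this
        · intro hp
          by_contra hpB
          have h1 : cls (d qb) = 2 := by
            rw [hB_eq, Finset.mem_filter] at hqb; exact hqb.2
          have h2 : cls (d p) ≠ 2 := by
            rw [hB_eq, Finset.mem_filter] at hpB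
            intro hc; exact hpB ⟨Finset.mem_univ _, hc⟩
          have h2' := cls_cases (d p)
          have h3 : cls (d p) < cls (d qb) := by omega
          have := hclsorder p qb h3
          have : (p : ℕ) < (qb : ℕ) := this
          omega
      have hBfilter : Bset r0 i₀ d
          = (univ : Finset (Fin N)).filter
            fun p : Fin N => (qb : ℕ) ≤ (p : ℕ) ∧ (p : ℕ) < N := by
        ext p
        rw [Finset.mem_filter]
        simp only [Finset.mem_univ, true_and]
        rw [hmemiff p]
        have := p.isLt
        tauto
      rw [hBfilter, card_filter_val_Ico N (le_of_lt qb.isLt) (le_refl N)]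
      have := qb.isLt
      omega
    · next hB =>
      rw [Finset.not_nonempty_iff_eq_empty.1 hB]
      simp
  rw [gval, haval]
  rw [hA_eq, hcount_cls 0]
  have hBcard : (Bset r0 i₀ d).card
      = ∑ i ∈ (univ : Finset (Fin m₀)).filter (fun i => cls i = 2), μ0 i := by
    rw [hB_eq, hcount_cls 2]
  rw [hBcard] at hbval
  rw [← hK1sum]
  omega

end Chunk2

end SAux

/-- Fixing all the `mᵢ` with `i ≠ i₀`, the function
`m_{i₀} ↦ L₊(P₀; m₁,…,m_{m₀})` is a polynomial in `m_{i₀}` whose degree is the sum of the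
values `mᵢ` over those `i ≠ i₀` such that `xᵢ` is incomparable with `x_{i₀}` in `P₀`. -/
theorem lexSum_linearizationCount_polynomial_in_one_variable (m₀ : ℕ)
    (r0 : Fin m₀ → Fin m₀ → Prop) (hr0 : IsPartialOrder (Fin m₀) r0)
    (i₀ : Fin m₀) (m : Fin m₀ → ℕ) :
    ∃ f : Polynomial ℚ,
      (∀ t : ℕ, (Lplus m₀ r0 (Function.update m i₀ t) : ℚ) = f.eval (t : ℚ)) ∧
      f.natDegree =
        ∑ i ∈ Finset.univ.filter (fun i : Fin m₀ => i ≠ i₀ ∧ ¬ r0 i i₀ ∧ ¬ r0 i₀ i), m i := by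
  classical
  set K := Finset.univ.filter (fun i : Fin m₀ => i ≠ i₀ ∧ ¬ r0 i i₀ ∧ ¬ r0 i₀ i) with hKdef
  set kk := ∑ i ∈ K, m i with hkkdef
  set μ0 : Fin m₀ → ℕ := Function.update m i₀ 0 with hμ0def
  set N : ℕ := ∑ i, μ0 i with hNdef
  have hμ00 : μ0 i₀ = 0 := Function.update_self i₀ 0 m
  have hμt : ∀ t : ℕ, (Function.update m i₀ t) i₀ = t := fun t => Function.update_self i₀ t m
  have hagree : ∀ t : ℕ, ∀ i : Fin m₀, i ≠ i₀ → μ0 i = Function.update m i₀ t i := by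
    intro t i hi
    rw [hμ0def, Function.update_of_ne hi, Function.update_of_ne hi]
  have hupdsum : ∀ t : ℕ, ∑ i, Function.update m i₀ t i
      = t + ∑ i ∈ Finset.univ \ {i₀}, m i := fun t =>
    Finset.sum_update_of_mem (Finset.mem_univ i₀) m t
  have hsum : ∀ t : ℕ, ∑ i, Function.update m i₀ t i = N + t := by
    intro t
    have h1 := hupdsum t
    have h0 := hupdsum 0
    rw [hNdef, hμ0def, h0, h1]
    omega
  have hk' : ∑ i ∈ K, μ0 i = kk := by
    rw [hkkdef]
    apply Finset.sum_congr rfl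
    intro i hi
    rw [hKdef, Finset.mem_filter] at hi
    exact Function.update_of_ne hi.2.1 0 m
  refine ⟨∑ d ∈ SAux.Wset r0 μ0 N, SAux.pol (SAux.gval r0 i₀ d), ?_, ?_⟩
  · intro t
    rw [SAux.lplus_eq_card_Wset r0 (Function.update m i₀ t), hsum t,
      SAux.card_Wset_eq_sum r0 i₀ hr0 μ0 (Function.update m i₀ t) hμ00 (hμt t) (hagree t)]
    rw [Polynomial.eval_finset_sum]
    rw [Nat.cast_sum]
    apply Finset.sum_congr rfl
    intro d _
    rw [SAux.pol_eval]
  · have hgle : ∀ d ∈ SAux.Wset r0 μ0 N, SAux.gval r0 i₀ d ≤ kk := by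
      intro d hd
      have := SAux.gval_le r0 i₀ hr0 (SAux.mem_Wset.1 hd) hμ00
      rw [← hKdef, hk'] at this
      exact this
    have hle : (∑ d ∈ SAux.Wset r0 μ0 N, SAux.pol (SAux.gval r0 i₀ d)).natDegree ≤ kk := by
      apply Polynomial.natDegree_sum_le_of_forall_le
      intro d hd
      rw [SAux.pol_natDegree]
      exact hgle d hd
    have hcoeff : (∑ d ∈ SAux.Wset r0 μ0 N, SAux.pol (SAux.gval r0 i₀ d)).coeff kk ≠ 0 := by
      rw [Polynomial.finset_sum_coeff]
      have hterm : ∀ d ∈ SAux.Wset r0 μ0 N, (SAux.pol (SAux.gval r0 i₀ d)).coeff kk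
          = if SAux.gval r0 i₀ d = kk then ((kk.factorial : ℚ))⁻¹ else 0 := by
        intro d hd
        by_cases hg : SAux.gval r0 i₀ d = kk
        · rw [if_pos hg, ← hg, SAux.pol_coeff_self]
        · rw [if_neg hg]
          apply Polynomial.coeff_eq_zero_of_natDegree_lt
          rw [SAux.pol_natDegree]
          exact lt_of_le_of_ne (hgle d hd) hg
      rw [Finset.sum_congr rfl hterm, ← Finset.sum_filter, Finset.sum_const, nsmul_eq_mul]
      have hne : ((SAux.Wset r0 μ0 N).filter
          fun d => SAux.gval r0 i₀ d = kk).Nonempty := by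
        obtain ⟨d, hd, hgd⟩ := SAux.exists_max_word r0 i₀ hr0 μ0 hμ00 hNdef.symm
        refine ⟨d, Finset.mem_filter.2 ⟨SAux.mem_Wset.2 hd, ?_⟩⟩
        rw [hgd, ← hKdef, hk']
      have h1 : (((SAux.Wset r0 μ0 N).filter
          fun d => SAux.gval r0 i₀ d = kk).card : ℚ) ≠ 0 := by
        rw [Nat.cast_ne_zero]
        exact Finset.card_ne_zero_of_mem hne.choose_spec
      have h2 : ((kk.factorial : ℚ))⁻¹ ≠ 0 :=
        inv_ne_zero (Nat.cast_ne_zero.2 kk.factorial_ne_zero)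
      exact mul_ne_zero h1 h2
    exact le_antisymm hle (Polynomial.le_natDegree_of_ne_zero hcoeff)
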